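/- In the time-expanded network N' with unit capacities, any two unit flows belonging to a feasible integer multiflow are vertex-disjoint. -/

import Mathlib

/-- Feasibility of a path set for an MPP instance `(G, R, x_I, x_G)`. -/
def Feasible {V : Type*} (G : SimpleGraph V) {n : ℕ} (xI xG : Fin n → V)
    (p : Fin n → ℕ → V) (k : Fin n → ℕ) : Prop :=
  (∀ i, p i 0 = xI i) ∧
  (∀ i t, k i ≤ t → p i t = xG i) ∧
  (∀ i t, (∀ s, t ≤ s → p i s = xG i) → k i ≤ t) ∧
  (∀ i t, p i t = p i (t + 1) ∨ G.Adj (p i t) (p i (t + 1))) ∧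
  (∀ i j, i ≠ j → ∀ t, p i t ≠ p j t) ∧
  (∀ i j, i ≠ j → ∀ t, ¬(p i t = p j (t + 1) ∧ p i (t + 1) = p j t))

/-- The makespan `T_P = max_i k_i^min`. -/
def makespan {n : ℕ} (k : Fin n → ℕ) : ℕ := Finset.univ.sup k

/-- Vertices of the time-expanded network `N'` built from a graph on `V`:
`plain v t` is the copy `v(t)`, `prime v t` is the copy `v(t)'`, and `mid1 e t`,
`mid2 e t` are the two middle vertices of the head-on-collision-preventing gadget placed
on the (undirected) edge `e` between time layers `t` and `t+1`. -/
inductive TEV (V : Type*) : Type _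
  | plain : V → ℕ → TEV V
  | prime : V → ℕ → TEV V
  | mid1 : Sym2 V → ℕ → TEV V
  | mid2 : Sym2 V → ℕ → TEV V

/-- The arcs (all of unit capacity) of the time-expanded network with horizon `T`:
the "hold" arcs `v(t) → v(t)'` and `v(t)' → v(t+1)`, and for each edge `{u,v}` of `G` and
each `t < T` the 5-arc gadget `u(t)',v(t)' → mid1 → mid2 → u(t+1),v(t+1)`, whose unit-capacity
middle arc prevents two robots from traversing the edge simultaneously. -/
inductive Arc {V : Type*} (G : SimpleGraph V) (T : ℕ) : TEV V → TEV V → Prop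
  | blue (v : V) (t : ℕ) : t ≤ T → Arc G T (.plain v t) (.prime v t)
  | green (v : V) (t : ℕ) : t < T → Arc G T (.prime v t) (.plain v (t + 1))
  | gadgetIn (u v : V) (t : ℕ) : G.Adj u v → t < T → Arc G T (.prime u t) (.mid1 s(u, v) t)
  | gadgetMid (e : Sym2 V) (t : ℕ) : e ∈ G.edgeSet → t < T → Arc G T (.mid1 e t) (.mid2 e t)
  | gadgetOut (u v : V) (t : ℕ) : G.Adj u v → t < T → Arc G T (.mid2 s(u, v) t) (.plain u (t + 1))

/-- An integer maximum multiflow of value `n` on the time-expanded network: one unit flow per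
robot (commodity), supported on the arcs, with total flow through each arc at most its unit
capacity, flow conservation away from each commodity's source `x_I(r_i)(0)` and sink
`x_G(r_i)(T)'`, and each commodity shipping exactly one unit from its source to its sink. -/
def IsMultiflow {V : Type*} (G : SimpleGraph V) (T : ℕ) {n : ℕ} (xI xG : Fin n → V)
    (f : Fin n → TEV V → TEV V → ℕ) : Prop :=
  (∀ i x y, f i x y ≠ 0 → Arc G T x y) ∧
  (∀ x y, (∑ i, f i x y) ≤ 1) ∧
  (∀ i x, x ≠ TEV.plain (xI i) 0 → x ≠ TEV.prime (xG i) T →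
      (∑ᶠ y, f i y x) = ∑ᶠ y, f i x y) ∧
  (∀ i, (∑ᶠ y, f i (TEV.plain (xI i) 0) y) = 1 ∧
        (∑ᶠ y, f i y (TEV.plain (xI i) 0)) = 0 ∧
        (∑ᶠ y, f i (TEV.prime (xG i) T) y) = 0 ∧
        (∑ᶠ y, f i y (TEV.prime (xG i) T)) = 1)

/-- The key arc of a vertex of `N'`: the unique hold/middle arc through which all flow
through that vertex must pass. -/
def keyArc {V : Type*} : TEV V → TEV V × TEV V
  | .plain v t => (.plain v t, .prime v t)
  | .prime v t => (.plain v t, .prime v t)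
  | .mid1 e t => (.mid1 e t, .mid2 e t)
  | .mid2 e t => (.mid1 e t, .mid2 e t)

lemma exists_ne_zero_of_finsum_ne_zero {α : Type*} {g : α → ℕ}
    (h : (∑ᶠ a, g a) ≠ 0) : ∃ a, g a ≠ 0 := by
  by_contra hc
  push_neg at hc
  exact h (finsum_eq_zero_of_forall_eq_zero hc)

lemma keyflow {V : Type*} (G : SimpleGraph V)
    (T : ℕ) {n : ℕ} (xI xG : Fin n → V)
    (f : Fin n → TEV V → TEV V → ℕ) (hf : IsMultiflow G T xI xG f)
    (r : Fin n) (x : TEV V)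
    (hx : ((∑ᶠ y, f r y x) + ∑ᶠ y, f r x y) ≠ 0) :
    f r (keyArc x).1 (keyArc x).2 ≠ 0 := by
  obtain ⟨hsupp, hcap, hcons, hsrc⟩ := hf
  rw [Ne, Nat.add_eq_zero, not_and_or] at hx
  cases x with
  | plain v t =>
    have hout : (∑ᶠ y, f r (TEV.plain v t) y) ≠ 0 → f r (TEV.plain v t) (TEV.prime v t) ≠ 0 := by
      intro h
      obtain ⟨y, hy⟩ := exists_ne_zero_of_finsum_ne_zero h
      have harc := hsupp r _ y hy
      cases harc
      exact hy
    rcases hx with hin | h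
    · by_cases hs : TEV.plain v t = TEV.plain (xI r) 0
      · rw [hs] at hin
        exact absurd (hsrc r).2.1 hin
      · have hc := hcons r (TEV.plain v t) hs (by intro h; cases h)
        rw [hc] at hin
        exact hout hin
    · exact hout h
  | prime v t =>
    have hin : (∑ᶠ y, f r y (TEV.prime v t)) ≠ 0 → f r (TEV.plain v t) (TEV.prime v t) ≠ 0 := by
      intro h
      obtain ⟨y, hy⟩ := exists_ne_zero_of_finsum_ne_zero h
      have harc := hsupp r y _ hy
      cases harc
      exact hy
    rcases hx with h | hout
    · exact hin h
    · by_cases hs : TEV.prime v t = TEV.prime (xG r) T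
      · rw [hs] at hout
        exact absurd (hsrc r).2.2.1 hout
      · have hc := hcons r (TEV.prime v t) (by intro h; cases h) hs
        rw [← hc] at hout
        exact hin hout
  | mid1 e t =>
    have hout : (∑ᶠ y, f r (TEV.mid1 e t) y) ≠ 0 → f r (TEV.mid1 e t) (TEV.mid2 e t) ≠ 0 := by
      intro h
      obtain ⟨y, hy⟩ := exists_ne_zero_of_finsum_ne_zero h
      have harc := hsupp r _ y hy
      cases harc
      exact hy
    rcases hx with hin | h
    · have hc := hcons r (TEV.mid1 e t) (by intro h; cases h)
        (by intro h; cases h)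
      rw [hc] at hin
      exact hout hin
    · exact hout h
  | mid2 e t =>
    have hin : (∑ᶠ y, f r y (TEV.mid2 e t)) ≠ 0 → f r (TEV.mid1 e t) (TEV.mid2 e t) ≠ 0 := by
      intro h
      obtain ⟨y, hy⟩ := exists_ne_zero_of_finsum_ne_zero h
      have harc := hsupp r y _ hy
      cases harc
      exact hy
    rcases hx with h | hout
    · exact hin h
    · have hc := hcons r (TEV.mid2 e t) (by intro h; cases h)
        (by intro h; cases h)
      rw [← hc] at hout
      exact hin hout

/-- In the time-expanded network with its unit capacities, any two unit flows belonging to a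
feasible integer multiflow are vertex-disjoint: for distinct commodities `i ≠ j`, there is no
vertex of the network through which both flows pass (the total flow of a commodity through a
vertex being its inflow plus its outflow there). -/
theorem stmt12 {V : Type*} [Fintype V] [DecidableEq V] (G : SimpleGraph V)
    (T : ℕ) {n : ℕ} (xI xG : Fin n → V)
    (hI : Function.Injective xI) (hGoal : Function.Injective xG)
    (f : Fin n → TEV V → TEV V → ℕ) (hf : IsMultiflow G T xI xG f)
    (i j : Fin n) (hij : i ≠ j) (x : TEV V) :
    ((∑ᶠ y, f i y x) + ∑ᶠ y, f i x y) = 0 ∨ ((∑ᶠ y, f j y x) + ∑ᶠ y, f j x y) = 0 := by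
  by_contra hcon
  push_neg at hcon
  obtain ⟨h1, h2⟩ := hcon
  have k1 := keyflow G T xI xG f hf i x h1
  have k2 := keyflow G T xI xG f hf j x h2
  set a := (keyArc x).1
  set b := (keyArc x).2
  have hcap := hf.2.1 a b
  have hsum : f i a b + ∑ r ∈ Finset.univ.erase i, f r a b = ∑ r, f r a b :=
    Finset.add_sum_erase Finset.univ (fun r => f r a b) (Finset.mem_univ i)
  have hj : f j a b ≤ ∑ r ∈ Finset.univ.erase i, f r a b :=
    Finset.single_le_sum (f := fun r => f r a b) (fun _ _ => Nat.zero_le _)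
      (Finset.mem_erase.2 ⟨hij.symm, Finset.mem_univ j⟩)
  omega
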